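/- Let G be a graph with maximum degree Δ such that every vertex has degree at least cΔ/ln^ε Δ, where c > 0 is a constant and ε ≥ 0 (Δ sufficiently large). Then χ_ON(G) = O(ln^{1+ε} Δ); specifically χ_ON(G) ≤ (490/c)·ln^{1+ε}(2Δ) + 1. -/

import Mathlib

open Finset

/-- `f` is a CFON coloring of `G`: every vertex has a color appearing
exactly once in its open neighborhood. -/
def IsCFONColoring {V : Type} (G : SimpleGraph V) {k : ℕ} (f : V → Fin k) : Prop :=
  ∀ v : V, ∃ c : Fin k, ∃! u : V, u ∈ G.neighborSet v ∧ f u = c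

/-- `f` is a CFCN coloring of `G`: every vertex has a color appearing
exactly once in its closed neighborhood. -/
def IsCFCNColoring {V : Type} (G : SimpleGraph V) {k : ℕ} (f : V → Fin k) : Prop :=
  ∀ v : V, ∃ c : Fin k, ∃! u : V, u ∈ insert v (G.neighborSet v) ∧ f u = c

/-- The CFON chromatic number of `G`. -/
noncomputable def chiON {V : Type} [Fintype V] (G : SimpleGraph V) : ℕ :=
  sInf {k : ℕ | ∃ f : V → Fin k, IsCFONColoring G f}

/-- The CFCN chromatic number of `G`. -/
noncomputable def chiCN {V : Type} [Fintype V] (G : SimpleGraph V) : ℕ :=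
  sInf {k : ℕ | ∃ f : V → Fin k, IsCFCNColoring G f}

namespace CFONaux

section Det
variable {V : Type} [Fintype V] [DecidableEq V] {M : ℕ}
set_option linter.unusedSectionVars false

/-- merge two functions: `ω` on `U`, `σ` off `U`. -/
def merge (U : Finset V) (ω σ : V → Fin M) : V → Fin M := fun v => if v ∈ U then ω v else σ v

/-- `E` is determined by coordinates in `U`. -/
def DetBy (E : Finset (V → Fin M)) (U : Finset V) : Prop :=
  ∀ ω σ : V → Fin M, (∀ u ∈ U, ω u = σ u) → (ω ∈ E ↔ σ ∈ E)

lemma merge_mem_of_detBy {E : Finset (V → Fin M)} {U : Finset V} (hE : DetBy E U)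
    {ω : V → Fin M} (hω : ω ∈ E) (σ : V → Fin M) : merge U ω σ ∈ E := by
  refine (hE (merge U ω σ) ω fun u hu => ?_).mpr hω
  simp [merge, hu]

lemma merge_mem_of_detBy' {F : Finset (V → Fin M)} {U W : Finset V} (hF : DetBy F W)
    (hUW : Disjoint U W) {σ : V → Fin M} (hσ : σ ∈ F) (ω : V → Fin M) : merge U ω σ ∈ F := by
  refine (hF (merge U ω σ) σ fun u hu => ?_).mpr hσ
  have : u ∉ U := fun h => (Finset.disjoint_left.mp hUW h) hu
  simp [merge, this]

lemma card_inter_mul_card {E F : Finset (V → Fin M)} {U W : Finset V}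
    (hE : DetBy E U) (hF : DetBy F W) (hUW : Disjoint U W) :
    (E ∩ F).card * Fintype.card (V → Fin M) = E.card * F.card := by
  classical
  rw [← Finset.card_univ, ← Finset.card_product, ← Finset.card_product]
  apply Finset.card_nbij' (i := fun p => (merge U p.1 p.2, merge U p.2 p.1))
    (j := fun p => (merge U p.1 p.2, merge U p.2 p.1))
  · rintro ⟨τ, ρ⟩ hp
    simp only [Finset.mem_coe, Finset.mem_product, Finset.mem_inter, Finset.mem_univ, and_true] at hp
    simp only [Finset.mem_coe, Finset.mem_product]
    exact ⟨merge_mem_of_detBy hE hp.1 ρ, merge_mem_of_detBy' hF hUW hp.2 ρ⟩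
  · rintro ⟨ω, σ⟩ hp
    simp only [Finset.mem_coe, Finset.mem_product] at hp
    refine Finset.mem_product.mpr ⟨Finset.mem_inter.mpr ⟨?_, ?_⟩, Finset.mem_univ _⟩
    · exact merge_mem_of_detBy hE hp.1 σ
    · exact merge_mem_of_detBy' hF hUW hp.2 ω
  · rintro ⟨τ, ρ⟩ _
    have h1 : merge U (merge U τ ρ) (merge U ρ τ) = τ := by
      funext v; by_cases h : v ∈ U <;> simp [merge, h]
    have h2 : merge U (merge U ρ τ) (merge U τ ρ) = ρ := by
      funext v; by_cases h : v ∈ U <;> simp [merge, h]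
    simp [h1, h2]
  · rintro ⟨ω, σ⟩ _
    have h1 : merge U (merge U ω σ) (merge U σ ω) = ω := by
      funext v; by_cases h : v ∈ U <;> simp [merge, h]
    have h2 : merge U (merge U σ ω) (merge U ω σ) = σ := by
      funext v; by_cases h : v ∈ U <;> simp [merge, h]
    simp [h1, h2]

end Det

section LLL
variable {Ω : Type} [Fintype Ω] [DecidableEq Ω] {ι : Type} [Fintype ι] [DecidableEq ι]

/-- the set of samples avoiding all bad events indexed by `S`. -/
def NoBad (A : ι → Finset Ω) (S : Finset ι) : Finset Ω :=
  univ.filter fun ω => ∀ i ∈ S, ω ∉ A i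

lemma noBad_empty (A : ι → Finset Ω) : NoBad A ∅ = univ := by
  simp [NoBad]

lemma noBad_anti (A : ι → Finset Ω) {S T : Finset ι} (h : S ⊆ T) : NoBad A T ⊆ NoBad A S := by
  intro ω hω
  simp only [NoBad, mem_filter, mem_univ, true_and] at hω ⊢
  exact fun i hi => hω i (h hi)

lemma noBad_insert (A : ι → Finset Ω) (S : Finset ι) (i : ι) :
    NoBad A (insert i S) = NoBad A S \ (A i ∩ NoBad A S) := by
  ext ω
  simp only [NoBad, mem_filter, mem_univ, true_and, mem_sdiff, mem_inter, mem_insert]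
  constructor
  · intro h
    exact ⟨fun j hj => h j (Or.inr hj), fun hc => (h i (Or.inl rfl)) hc.1⟩
  · rintro ⟨h1, h2⟩ j hj
    rcases hj with rfl | hj
    · exact fun hA => h2 ⟨hA, h1⟩
    · exact h1 j hj

lemma card_noBad_insert (A : ι → Finset Ω) (S : Finset ι) (i : ι) :
    ((NoBad A (insert i S)).card : ℝ)
      = ((NoBad A S).card : ℝ) - ((A i ∩ NoBad A S).card : ℝ) := by
  rw [noBad_insert, Finset.card_sdiff, Finset.inter_eq_left.mpr Finset.inter_subset_right]
  exact Nat.cast_sub (Finset.card_le_card Finset.inter_subset_right)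

theorem locallemma [Nonempty Ω] (A : ι → Finset Ω) (Γ : ι → Finset ι) (d : ℕ) (p x : ℝ)
    (hx0 : 0 < x) (hx1 : x < 1)
    (hself : ∀ i, i ∈ Γ i) (hΓ : ∀ i, (Γ i).card ≤ d + 1)
    (hp : ∀ i, ((A i).card : ℝ) ≤ p * Fintype.card Ω)
    (hpx : p ≤ x * (1 - x) ^ d)
    (hind : ∀ i, ∀ S : Finset ι, (∀ j ∈ S, j ∉ Γ i) →
      ((A i ∩ NoBad A S).card : ℝ) * Fintype.card Ω ≤ (A i).card * (NoBad A S).card) :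
    ∃ ω : Ω, ∀ i, ω ∉ A i := by
  have hΩ : (0 : ℝ) < Fintype.card Ω := by exact_mod_cast Fintype.card_pos
  have h1x : (0 : ℝ) < 1 - x := by linarith
  have hAp : ∀ i (S : Finset ι), (∀ j ∈ S, j ∉ Γ i) →
      ((A i ∩ NoBad A S).card : ℝ) ≤ p * (NoBad A S).card := by
    intro i S hS
    have h1 := hind i S hS
    have h2 : ((A i).card : ℝ) * (NoBad A S).card ≤ p * Fintype.card Ω * (NoBad A S).card :=
      mul_le_mul_of_nonneg_right (hp i) (by positivity)
    have h3 : ((A i ∩ NoBad A S).card : ℝ) * Fintype.card Ω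
        ≤ p * (NoBad A S).card * Fintype.card Ω := by
      calc ((A i ∩ NoBad A S).card : ℝ) * Fintype.card Ω ≤ _ := h1
        _ ≤ p * Fintype.card Ω * (NoBad A S).card := h2
        _ = p * (NoBad A S).card * Fintype.card Ω := by ring
    exact le_of_mul_le_mul_right h3 hΩ
  have key : ∀ n : ℕ, ∀ S : Finset ι, S.card ≤ n → ∀ i : ι,
      ((A i ∩ NoBad A S).card : ℝ) ≤ x * (NoBad A S).card := by
    intro n
    induction n with
    | zero =>
      intro S hS i
      have hSe : S = ∅ := Finset.card_eq_zero.mp (Nat.le_zero.mp hS)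
      subst hSe
      have h0 : (∀ j ∈ (∅ : Finset ι), j ∉ Γ i) := by simp
      calc ((A i ∩ NoBad A ∅).card : ℝ) ≤ p * (NoBad A ∅).card := hAp i ∅ h0
        _ ≤ x * (1 - x) ^ d * (NoBad A ∅).card := by
            apply mul_le_mul_of_nonneg_right hpx (by positivity)
        _ ≤ x * 1 * (NoBad A ∅).card := by
            refine mul_le_mul_of_nonneg_right ?_ (by positivity)
            exact mul_le_mul_of_nonneg_left (pow_le_one₀ h1x.le (by linarith)) hx0.le
        _ = x * (NoBad A ∅).card := by ring
    | succ n ih =>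
      intro S hScard i
      by_cases hiS : i ∈ S
      · have hempty : A i ∩ NoBad A S = ∅ := by
          ext ω
          simp only [mem_inter, NoBad, mem_filter, mem_univ, true_and, Finset.notMem_empty,
            iff_false, not_and]
          intro h1 h2
          exact h2 i hiS h1
        rw [hempty]
        simp only [Finset.card_empty, Nat.cast_zero]
        positivity
      · set S₁ : Finset ι := S ∩ Γ i with hS₁
        set S₂ : Finset ι := S \ Γ i with hS₂
        have hS₂Γ : ∀ j ∈ S₂, j ∉ Γ i := fun j hj => (Finset.mem_sdiff.mp hj).2
        have peel : ∀ T : Finset ι, T ⊆ S₁ →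
            (1 - x) ^ T.card * ((NoBad A S₂).card : ℝ) ≤ ((NoBad A (S₂ ∪ T)).card : ℝ) := by
          intro T
          induction T using Finset.induction_on with
          | empty => intro _; simp
          | @insert j T hjT ihT =>
            intro hins
            have hTS₁ : T ⊆ S₁ := fun a ha => hins (Finset.mem_insert_of_mem ha)
            have hjS₁ : j ∈ S₁ := hins (Finset.mem_insert_self _ _)
            have hcard : (S₂ ∪ T).card ≤ n := by
              have hsub : S₂ ∪ T ⊆ S.erase j := by
                intro a ha
                rcases Finset.mem_union.mp ha with h | h
                · refine Finset.mem_erase.mpr ⟨?_, (Finset.mem_sdiff.mp h).1⟩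
                  rintro rfl
                  exact (Finset.mem_sdiff.mp h).2 (Finset.mem_of_mem_inter_right hjS₁)
                · refine Finset.mem_erase.mpr ⟨?_, (Finset.mem_inter.mp (hTS₁ h)).1⟩
                  rintro rfl
                  exact hjT h
              have h5 : (S.erase j).card = S.card - 1 :=
                Finset.card_erase_of_mem (Finset.mem_of_mem_inter_left hjS₁)
              have h6 := Finset.card_le_card hsub
              omega
            have hkey := ih (S₂ ∪ T) hcard j
            have hgrow : ((NoBad A (S₂ ∪ insert j T)).card : ℝ)
                ≥ (1 - x) * ((NoBad A (S₂ ∪ T)).card : ℝ) := by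
              rw [Finset.union_insert, card_noBad_insert]
              nlinarith [hkey]
            calc (1 - x) ^ (insert j T).card * ((NoBad A S₂).card : ℝ)
                = (1 - x) * ((1 - x) ^ T.card * ((NoBad A S₂).card : ℝ)) := by
                  rw [Finset.card_insert_of_notMem hjT]; ring
              _ ≤ (1 - x) * ((NoBad A (S₂ ∪ T)).card : ℝ) :=
                  mul_le_mul_of_nonneg_left (ihT hTS₁) h1x.le
              _ ≤ ((NoBad A (S₂ ∪ insert j T)).card : ℝ) := hgrow
        have hp0 : 0 ≤ p := by nlinarith [hp i, hΩ, Nat.cast_nonneg (α := ℝ) (A i).card]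
        have hS₂S₁ : S₂ ∪ S₁ = S := Finset.sdiff_union_inter S (Γ i)
        have hpeel : (1 - x) ^ S₁.card * ((NoBad A S₂).card : ℝ) ≤ ((NoBad A S).card : ℝ) := by
          have := peel S₁ (subset_rfl)
          rwa [hS₂S₁] at this
        have hs₁d : S₁.card ≤ d := by
          have hsub : S₁ ⊆ (Γ i).erase i := by
            intro a ha
            refine Finset.mem_erase.mpr ⟨?_, Finset.mem_of_mem_inter_right ha⟩
            rintro rfl
            exact hiS (Finset.mem_of_mem_inter_left ha)
          have h5 : ((Γ i).erase i).card = (Γ i).card - 1 :=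
            Finset.card_erase_of_mem (hself i)
          have h6 := Finset.card_le_card hsub
          have h7 := hΓ i
          omega
        have hc1 : ((A i ∩ NoBad A S).card : ℝ) ≤ p * ((NoBad A S₂).card : ℝ) := by
          refine le_trans ?_ (hAp i S₂ hS₂Γ)
          have hcc : (A i ∩ NoBad A S).card ≤ (A i ∩ NoBad A S₂).card :=
            Finset.card_le_card (Finset.inter_subset_inter (Finset.Subset.refl _)
              (noBad_anti A Finset.sdiff_subset))
          exact_mod_cast hcc
        have hpow_pos : (0:ℝ) < (1 - x) ^ S₁.card := pow_pos h1x _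
        have main2 : ((A i ∩ NoBad A S).card : ℝ) * (1 - x) ^ S₁.card
            ≤ x * ((NoBad A S).card : ℝ) * (1 - x) ^ S₁.card := by
          calc ((A i ∩ NoBad A S).card : ℝ) * (1 - x) ^ S₁.card
              ≤ (p * ((NoBad A S₂).card : ℝ)) * (1 - x) ^ S₁.card :=
                mul_le_mul_of_nonneg_right hc1 hpow_pos.le
            _ = p * ((1 - x) ^ S₁.card * ((NoBad A S₂).card : ℝ)) := by ring
            _ ≤ p * ((NoBad A S).card : ℝ) := mul_le_mul_of_nonneg_left hpeel hp0
            _ ≤ (x * (1 - x) ^ d) * ((NoBad A S).card : ℝ) :=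
                mul_le_mul_of_nonneg_right hpx (Nat.cast_nonneg _)
            _ ≤ (x * (1 - x) ^ S₁.card) * ((NoBad A S).card : ℝ) := by
                refine mul_le_mul_of_nonneg_right ?_ (Nat.cast_nonneg _)
                exact mul_le_mul_of_nonneg_left
                  (pow_le_pow_of_le_one h1x.le (by linarith) hs₁d) hx0.le
            _ = x * ((NoBad A S).card : ℝ) * (1 - x) ^ S₁.card := by ring
        exact le_of_mul_le_mul_right main2 hpow_pos
  have pos : ∀ S : Finset ι, (0:ℝ) < ((NoBad A S).card : ℝ) := by
    intro S
    induction S using Finset.induction_on with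
    | empty =>
      rw [noBad_empty]
      simpa [Finset.card_univ] using hΩ
    | @insert i S hiS ihS =>
      rw [card_noBad_insert]
      have := key S.card S le_rfl i
      nlinarith
  have hpos : 0 < (NoBad A univ).card := by exact_mod_cast pos univ
  obtain ⟨ω, hω⟩ := Finset.card_pos.mp hpos
  simp only [NoBad, mem_filter, mem_univ, true_and] at hω
  exact ⟨ω, fun i => hω i trivial⟩

end LLL

lemma F_ge_one (t : ℕ) (ht : t ≠ 1) : 1 ≤ (1/5) * (2:ℝ)^t + (4/5) * (1/2:ℝ)^t := by
  have hhalf : ((1/2:ℝ))^t = ((2:ℝ)^t)⁻¹ := by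
    rw [one_div, inv_pow]
  rw [hhalf]
  rcases Nat.lt_or_ge t 2 with h | h
  · interval_cases t
    · norm_num
    · omega
  · have h4 : (4:ℝ) ≤ (2:ℝ)^t := by
      calc (4:ℝ) = 2^2 := by norm_num
        _ ≤ 2^t := by
          apply pow_le_pow_right₀ (by norm_num) h
    have hpos : (0:ℝ) < (2:ℝ)^t := by positivity
    have hid : (2:ℝ)^t * ((2:ℝ)^t)⁻¹ = 1 := mul_inv_cancel₀ hpos.ne'
    nlinarith [sq_nonneg ((2:ℝ)^t - 4), mul_pos hpos (inv_pos.mpr hpos)]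

lemma exp_half_le : Real.exp (1/2) ≤ 1.64873 := by
  have h : Real.exp (1/2) * Real.exp (1/2) = Real.exp 1 := by
    rw [← Real.exp_add]; norm_num
  nlinarith [Real.exp_one_lt_d9, Real.exp_pos (1/2 : ℝ)]

lemma exp_quarter_ge : (1.28402 : ℝ) ≤ Real.exp (1/4) := by
  have h : Real.exp (1/4) ^ (4:ℕ) = Real.exp 1 := by
    rw [← Real.exp_nat_mul]; norm_num
  by_contra hcon
  push_neg at hcon
  have h2 : Real.exp (1/4) ^ (4:ℕ) ≤ (1.28402:ℝ)^(4:ℕ) :=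
    pow_le_pow_left₀ (Real.exp_pos _).le hcon.le 4
  rw [h] at h2
  nlinarith [Real.exp_one_gt_d9]

lemma exp_neg_quarter_le : Real.exp (-(1/4)) ≤ 0.77881 := by
  rw [Real.exp_neg]
  have h := exp_quarter_ge
  have hpos : (0:ℝ) < Real.exp (1/4) := Real.exp_pos _
  rw [inv_le_comm₀ hpos (by norm_num)]
  calc (0.77881:ℝ)⁻¹ ≤ 1.28402 := by norm_num
    _ ≤ Real.exp (1/4) := h

lemma g_half_le : (1/5) * Real.exp (1/2) + (4/5) * Real.exp (-(1/4)) ≤ 1 - 1/24 := by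
  nlinarith [exp_half_le, exp_neg_quarter_le]

lemma g_le (μ : ℝ) (h0 : 0 ≤ μ) (h1 : μ ≤ 1/2) :
    (1/5) * Real.exp μ + (4/5) * Real.exp (-(μ/2)) ≤ 1 - μ/12 := by
  have ha : (0:ℝ) ≤ 1 - 2*μ := by linarith
  have hb : (0:ℝ) ≤ 2*μ := by linarith
  have hab : (1 - 2*μ) + 2*μ = 1 := by ring
  have he1 := convexOn_exp.2 (Set.mem_univ (0:ℝ)) (Set.mem_univ (1/2 : ℝ)) ha hb hab
  have he2 := convexOn_exp.2 (Set.mem_univ (0:ℝ)) (Set.mem_univ (-(1/4) : ℝ)) ha hb hab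
  simp only [smul_eq_mul, mul_zero, zero_add, Real.exp_zero, mul_one] at he1 he2
  have hμ1 : (2*μ) * (1/2 : ℝ) = μ := by ring
  have hμ2 : (2*μ) * (-(1/4) : ℝ) = -(μ/2) := by ring
  rw [hμ1] at he1
  rw [hμ2] at he2
  nlinarith [g_half_le, Real.exp_pos (1/2:ℝ), Real.exp_pos (-(1/4):ℝ)]

lemma exp_neg_one_le_pow (d : ℕ) (hd : 1 ≤ d) :
    Real.exp (-1) ≤ (1 - 1/((d:ℝ)+1))^d := by
  have hd0 : (0:ℝ) < d := by exact_mod_cast hd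
  have h1 : (1 + 1/(d:ℝ)) ≤ Real.exp (1/d) := by
    have := Real.add_one_le_exp (1/(d:ℝ)); linarith
  have h2 : ((1:ℝ)+1/d)^d ≤ Real.exp (1/d)^d :=
    pow_le_pow_left₀ (by positivity) h1 d
  have h3 : Real.exp (1/(d:ℝ))^d = Real.exp 1 := by
    rw [← Real.exp_nat_mul]
    congr 1
    field_simp
  have key : ((1:ℝ)+1/d)^d ≤ Real.exp 1 := h3 ▸ h2
  have hbase : (1 - 1/((d:ℝ)+1)) = (1 + 1/(d:ℝ))⁻¹ := by
    field_simp
    ring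
  rw [hbase, inv_pow, Real.exp_neg]
  apply inv_anti₀ (by positivity) key


variable {V : Type} [Fintype V] [DecidableEq V]

/-- coefficient -/
noncomputable def cf (b : Bool) : ℝ := if b then 1/5 else 4/5
/-- base -/
noncomputable def lam (b : Bool) : ℝ := if b then 2 else 1/2

lemma cf_pos (b : Bool) : 0 < cf b := by cases b <;> norm_num [cf]
lemma lam_pos (b : Bool) : 0 < lam b := by cases b <;> norm_num [lam]

/-- weight of a seed value -/
noncomputable def wt {M k : ℕ} (χ : Fin k → Bool) (x : Fin M) : ℝ :=
  if h : (x : ℕ) < k then lam (χ ⟨(x : ℕ), h⟩) else 1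

lemma wt_pos {M k : ℕ} (χ : Fin k → Bool) (x : Fin M) : 0 < wt χ x := by
  unfold wt
  split
  · exact lam_pos _
  · norm_num

lemma sum_wt {M k : ℕ} (hkM : k ≤ M) (χ : Fin k → Bool) :
    ∑ x : Fin M, wt χ x = (M : ℝ) + ∑ j : Fin k, (lam (χ j) - 1) := by
  classical
  have hsplit := Finset.sum_filter_add_sum_filter_not (univ : Finset (Fin M))
    (fun x => (x : ℕ) < k) (wt χ)
  have hmap : (univ : Finset (Fin k)).map (Fin.castLEEmb hkM)
      = univ.filter (fun x : Fin M => (x : ℕ) < k) := by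
    ext x
    simp only [Finset.mem_map, Finset.mem_univ, true_and, Finset.mem_filter]
    constructor
    · rintro ⟨j, _, rfl⟩
      exact j.isLt
    · intro hx
      exact ⟨⟨(x : ℕ), hx⟩, by apply Fin.ext; simp⟩
  have h1 : ∑ x ∈ univ.filter (fun x : Fin M => (x : ℕ) < k), wt χ x
      = ∑ j : Fin k, lam (χ j) := by
    rw [← hmap, Finset.sum_map]
    apply Finset.sum_congr rfl
    intro j _
    have : ((Fin.castLEEmb hkM) j : ℕ) < k := by simp [j.isLt]
    rw [wt, dif_pos this]
    congr 1
  have h2 : ∑ x ∈ univ.filter (fun x : Fin M => ¬ ((x : ℕ) < k)), wt χ x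
      = ((univ.filter (fun x : Fin M => ¬ ((x : ℕ) < k))).card : ℝ) := by
    rw [Finset.sum_congr rfl (fun x hx => ?_), Finset.sum_const, nsmul_eq_mul, mul_one]
    exact dif_neg (Finset.mem_filter.mp hx).2
  have hcards : (univ.filter (fun x : Fin M => (x : ℕ) < k)).card
      + (univ.filter (fun x : Fin M => ¬ ((x : ℕ) < k))).card = M := by
    have := Finset.card_filter_add_card_filter_not
      (s := (univ : Finset (Fin M))) (p := fun x : Fin M => (x : ℕ) < k)
    simpa using this
  have hcard1 : (univ.filter (fun x : Fin M => (x : ℕ) < k)).card = k := by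
    rw [← hmap, Finset.card_map, Finset.card_univ, Fintype.card_fin]
  rw [← hsplit, h1, h2]
  have : (univ.filter (fun x : Fin M => ¬ ((x : ℕ) < k))).card = M - k := by omega
  rw [this]
  have hMk : ((M - k : ℕ) : ℝ) = (M : ℝ) - k := by
    push_cast [Nat.cast_sub hkM]; ring
  rw [hMk, Finset.sum_sub_distrib]
  simp only [Finset.sum_const, Finset.card_univ, Fintype.card_fin, nsmul_eq_mul, mul_one]
  ring


variable {V : Type} [Fintype V] [DecidableEq V]

lemma sum_prod_wt {M k : ℕ} (χ : Fin k → Bool) (N : Finset V) :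
    ∑ ω : V → Fin M, ∏ u ∈ N, wt χ (ω u)
      = (∑ x : Fin M, wt χ x) ^ N.card * (M : ℝ) ^ (Fintype.card V - N.card) := by
  classical
  have h1 : ∀ ω : V → Fin M, ∏ u ∈ N, wt χ (ω u)
      = ∏ u : V, (if u ∈ N then wt χ (ω u) else 1) := by
    intro ω
    rw [Finset.prod_ite_mem, Finset.univ_inter]
  simp_rw [h1]
  have h2 : ∑ ω : V → Fin M, ∏ u : V, (if u ∈ N then wt χ (ω u) else 1)
      = ∏ u : V, ∑ x : Fin M, (if u ∈ N then wt χ x else 1) := by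
    rw [Finset.prod_univ_sum (t := fun _ => (univ : Finset (Fin M)))
      (f := fun u x => if u ∈ N then wt χ x else 1), Fintype.piFinset_univ]
  rw [h2]
  have h3 : ∀ u : V, (∑ x : Fin M, (if u ∈ N then wt χ x else 1))
      = (if u ∈ N then (∑ x : Fin M, wt χ x) else (M : ℝ)) := by
    intro u
    by_cases h : u ∈ N <;> simp [h]
  rw [Finset.prod_congr rfl (fun u _ => h3 u)]
  rw [Finset.prod_ite, Finset.prod_const, Finset.prod_const]
  congr 1
  · congr 1
    rw [Finset.filter_univ_mem]
  · congr 1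
    have := Finset.card_filter_add_card_filter_not
      (s := (univ : Finset V)) (p := fun u => u ∈ N)
    rw [Finset.filter_univ_mem] at this
    simp only [Finset.card_univ] at this
    omega

lemma card_bad_le (G : SimpleGraph V) [DecidableRel G.Adj]
    (M k : ℕ) (hkM : k ≤ M) (hM : 0 < M) (v : V) :
    ((univ.filter (fun ω : V → Fin M =>
        ∀ j : Fin k, ((G.neighborFinset v).filter fun u => ((ω u : ℕ) = (j : ℕ))).card ≠ 1)).card : ℝ)
      ≤ ((1/5) * Real.exp ((G.degree v : ℝ)/M)
          + (4/5) * Real.exp (-((G.degree v : ℝ)/M/2)))^k * (M : ℝ) ^ (Fintype.card V) := by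
  classical
  set N := G.neighborFinset v with hN
  set n := Fintype.card V with hn
  have hmN : N.card = G.degree v := rfl
  set μ : ℝ := (G.degree v : ℝ)/M with hμ
  have hmn : N.card ≤ n := by
    rw [hn]; exact Finset.card_le_univ N
  set cnt : Fin k → (V → Fin M) → ℕ :=
    fun j ω => (N.filter fun u => ((ω u : ℕ) = (j : ℕ))).card with hcnt
  -- Step A : pointwise majorization
  have stepA : ((univ.filter (fun ω : V → Fin M => ∀ j : Fin k, cnt j ω ≠ 1)).card : ℝ)
      ≤ ∑ ω : V → Fin M, ∏ j : Fin k,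
          ((1/5) * (2:ℝ)^(cnt j ω) + (4/5) * (1/2:ℝ)^(cnt j ω)) := by
    rw [Finset.card_filter]
    push_cast
    apply Finset.sum_le_sum
    intro ω _
    by_cases hP : ∀ j : Fin k, cnt j ω ≠ 1
    · rw [if_pos hP]
      calc (1:ℝ) = ∏ _j : Fin k, 1 := by rw [Finset.prod_const_one]
        _ ≤ _ := by
          apply Finset.prod_le_prod
          · intro j _; norm_num
          · intro j _; exact F_ge_one (cnt j ω) (hP j)
    · rw [if_neg hP]
      apply Finset.prod_nonneg
      intro j _
      positivity
  -- Step B+C : expand the product over colors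
  have stepBC : ∀ ω : V → Fin M, ∏ j : Fin k,
        ((1/5) * (2:ℝ)^(cnt j ω) + (4/5) * (1/2:ℝ)^(cnt j ω))
      = ∑ χ ∈ Fintype.piFinset (fun _ : Fin k => (univ : Finset Bool)),
          (∏ j : Fin k, cf (χ j)) * ∏ u ∈ N, wt χ (ω u) := by
    intro ω
    have hF : ∀ j : Fin k, (1/5) * (2:ℝ)^(cnt j ω) + (4/5) * (1/2:ℝ)^(cnt j ω)
        = ∑ b : Bool, cf b * lam b ^ (cnt j ω) := by
      intro j
      rw [Fintype.sum_bool]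
      norm_num [cf, lam]
    rw [Finset.prod_congr rfl (fun j _ => hF j)]
    rw [Finset.prod_univ_sum]
    apply Finset.sum_congr rfl
    intro χ _
    rw [Finset.prod_mul_distrib]
    congr 1
    -- ∏ j, lam (χ j) ^ cnt j ω = ∏ u ∈ N, wt χ (ω u)
    have hlam : ∀ j : Fin k, lam (χ j) ^ (cnt j ω)
        = ∏ u ∈ N, (if ((ω u : ℕ) = (j : ℕ)) then lam (χ j) else 1) := by
      intro j
      rw [Finset.prod_ite, Finset.prod_const, Finset.prod_const, one_pow, mul_one]
    rw [Finset.prod_congr rfl (fun j _ => hlam j), Finset.prod_comm]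
    apply Finset.prod_congr rfl
    intro u _
    by_cases h : (ω u : ℕ) < k
    · rw [Finset.prod_eq_single (⟨(ω u : ℕ), h⟩ : Fin k)]
      · rw [if_pos rfl, wt, dif_pos h]
      · intro j _ hj
        rw [if_neg]
        intro hc
        apply hj
        apply Fin.ext
        simp [← hc]
      · intro habs
        exact absurd (Finset.mem_univ _) habs
    · rw [Finset.prod_eq_one, wt, dif_neg h]
      intro j _
      rw [if_neg]
      intro hc
      exact h (hc ▸ j.isLt)
  -- Step D–F : per-χ bound
  have stepDF : ∀ χ : Fin k → Bool,
      (∏ j : Fin k, cf (χ j)) * (∑ ω : V → Fin M, ∏ u ∈ N, wt χ (ω u))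
        ≤ (M:ℝ)^n * ∏ j : Fin k, (cf (χ j) * Real.exp (μ * (lam (χ j) - 1))) := by
    intro χ
    rw [sum_prod_wt]
    have hS : ∑ x : Fin M, wt χ x = (M : ℝ) + ∑ j : Fin k, (lam (χ j) - 1) :=
      sum_wt hkM χ
    set z : ℝ := ∑ j : Fin k, (lam (χ j) - 1) with hz
    have hS0 : 0 ≤ ∑ x : Fin M, wt χ x :=
      Finset.sum_nonneg fun x _ => (wt_pos χ x).le
    have hMpos : (0:ℝ) < M := by exact_mod_cast hM
    have hSle : ∑ x : Fin M, wt χ x ≤ (M:ℝ) * Real.exp (z / M) := by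
      rw [hS]
      have h1 : 1 + z / M ≤ Real.exp (z / M) := by
        have := Real.add_one_le_exp (z / M); linarith
      calc (M:ℝ) + z = (M:ℝ) * (1 + z/M) := by field_simp
        _ ≤ (M:ℝ) * Real.exp (z/M) := by
            apply mul_le_mul_of_nonneg_left h1 hMpos.le
    have hpow : (∑ x : Fin M, wt χ x) ^ N.card
        ≤ ((M:ℝ) * Real.exp (z / M)) ^ N.card :=
      pow_le_pow_left₀ hS0 hSle _
    have hexp : ((M:ℝ) * Real.exp (z / M)) ^ N.card
        = (M:ℝ)^N.card * Real.exp (μ * z) := by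
      rw [mul_pow, ← Real.exp_nat_mul, hmN]
      congr 2
      rw [hμ]
      ring
    have hcfpos : (0:ℝ) ≤ ∏ j : Fin k, cf (χ j) :=
      Finset.prod_nonneg fun j _ => (cf_pos (χ j)).le
    calc (∏ j : Fin k, cf (χ j)) * ((∑ x : Fin M, wt χ x) ^ N.card * (M:ℝ)^(n - N.card))
        ≤ (∏ j : Fin k, cf (χ j)) * (((M:ℝ)^N.card * Real.exp (μ * z)) * (M:ℝ)^(n - N.card)) := by
          apply mul_le_mul_of_nonneg_left _ hcfpos
          apply mul_le_mul_of_nonneg_right _ (by positivity)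
          rw [← hexp]
          exact hpow
      _ = (M:ℝ)^n * ((∏ j : Fin k, cf (χ j)) * Real.exp (μ * z)) := by
          have hMn : (M:ℝ)^N.card * (M:ℝ)^(n - N.card) = (M:ℝ)^n := by
            rw [← pow_add]; congr 1; omega
          rw [← hMn]
          ring
      _ = (M:ℝ)^n * ∏ j : Fin k, (cf (χ j) * Real.exp (μ * (lam (χ j) - 1))) := by
          congr 1
          rw [Finset.prod_mul_distrib, ← Real.exp_sum]
          congr 2
          rw [hz, Finset.mul_sum]
  -- assemble
  calc ((univ.filter (fun ω : V → Fin M => ∀ j : Fin k, cnt j ω ≠ 1)).card : ℝ)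
      ≤ ∑ ω : V → Fin M, ∏ j : Fin k,
          ((1/5) * (2:ℝ)^(cnt j ω) + (4/5) * (1/2:ℝ)^(cnt j ω)) := stepA
    _ = ∑ ω : V → Fin M, ∑ χ ∈ Fintype.piFinset (fun _ : Fin k => (univ : Finset Bool)),
          (∏ j : Fin k, cf (χ j)) * ∏ u ∈ N, wt χ (ω u) := by
        exact Finset.sum_congr rfl fun ω _ => stepBC ω
    _ = ∑ χ ∈ Fintype.piFinset (fun _ : Fin k => (univ : Finset Bool)),
          (∏ j : Fin k, cf (χ j)) * (∑ ω : V → Fin M, ∏ u ∈ N, wt χ (ω u)) := by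
        rw [Finset.sum_comm]
        exact Finset.sum_congr rfl fun χ _ => by rw [Finset.mul_sum]
    _ ≤ ∑ χ ∈ Fintype.piFinset (fun _ : Fin k => (univ : Finset Bool)),
          (M:ℝ)^n * ∏ j : Fin k, (cf (χ j) * Real.exp (μ * (lam (χ j) - 1))) := by
        exact Finset.sum_le_sum fun χ _ => stepDF χ
    _ = (M:ℝ)^n * ∑ χ ∈ Fintype.piFinset (fun _ : Fin k => (univ : Finset Bool)),
          ∏ j : Fin k, (cf (χ j) * Real.exp (μ * (lam (χ j) - 1))) := by
        rw [← Finset.mul_sum]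
    _ = (M:ℝ)^n * ∏ j : Fin k, ∑ b : Bool, (cf b * Real.exp (μ * (lam b - 1))) := by
        rw [Finset.prod_univ_sum]
    _ = (M:ℝ)^n * (∑ b : Bool, cf b * Real.exp (μ * (lam b - 1))) ^ k := by
        congr 1
        rw [Finset.prod_const, Finset.card_univ, Fintype.card_fin]
    _ = ((1/5) * Real.exp μ + (4/5) * Real.exp (-(μ/2)))^k * (M : ℝ) ^ n := by
        rw [Fintype.sum_bool]
        have hb : cf true * Real.exp (μ * (lam true - 1))
            + cf false * Real.exp (μ * (lam false - 1))
            = (1/5) * Real.exp μ + (4/5) * Real.exp (-(μ/2)) := by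
          have h1 : μ * (lam true - 1) = μ := by norm_num [lam]
          have h2 : μ * (lam false - 1) = -(μ/2) := by norm_num [lam]; ring
          rw [h1, h2]
          norm_num [cf]
        rw [hb]
        ring

end CFONaux

section Main

open CFONaux

set_option maxHeartbeats 2000000 in
theorem chiON_high_min_degree (c ε : ℝ) (hc : 0 < c) (hε : 0 ≤ ε) :
    ∃ Δ₀ : ℕ, ∀ (V : Type) [Fintype V] (G : SimpleGraph V) [DecidableRel G.Adj],
      Δ₀ ≤ G.maxDegree →
      (∀ v : V, c * G.maxDegree / (Real.log G.maxDegree) ^ ε ≤ (G.degree v : ℝ)) →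
      (chiON G : ℝ) ≤ (490 / c) * Real.log (2 * G.maxDegree) ^ (1 + ε) + 1 := by
  -- Step 0: choose Δ₀ from asymptotics
  have hasymp : ∃ Δ₀ : ℕ, 3 ≤ Δ₀ ∧
      ∀ D : ℕ, Δ₀ ≤ D → (490/c) * Real.log (2*(D:ℝ)) ^ (1+ε) ≤ (D:ℝ) := by
    have h1 := isLittleO_log_rpow_rpow_atTop (s := (1:ℝ)) (1+ε) one_pos
    have h2 : Filter.Tendsto (fun x : ℝ => 2*x) Filter.atTop Filter.atTop :=
      Filter.Tendsto.const_mul_atTop two_pos Filter.tendsto_id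
    have h3 := h1.comp_tendsto h2
    have h4 := h3.def (show (0:ℝ) < c/980 by positivity)
    have h5 : ∀ᶠ x : ℝ in Filter.atTop,
        (490/c) * Real.log (2*x) ^ (1+ε) ≤ x := by
      filter_upwards [h4, Filter.eventually_ge_atTop (1:ℝ)] with x hx hx1
      simp only [Function.comp] at hx
      have hlog0 : (0:ℝ) ≤ Real.log (2*x) := by
        apply Real.log_nonneg; linarith
      have hr0 : (0:ℝ) ≤ Real.log (2*x) ^ (1+ε) := Real.rpow_nonneg hlog0 _
      have hx0 : (0:ℝ) ≤ x := by linarith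
      rw [Real.norm_eq_abs, Real.norm_eq_abs, abs_of_nonneg hr0] at hx
      have h2x : |((2*x) ^ (1:ℝ))| = 2*x := by
        rw [Real.rpow_one, abs_of_nonneg (by linarith)]
      rw [h2x] at hx
      have : Real.log (2*x) ^ (1+ε) ≤ (c/490) * x := by
        calc Real.log (2*x) ^ (1+ε) ≤ c/980 * (2*x) := hx
          _ = (c/490) * x := by ring
      calc (490/c) * Real.log (2*x) ^ (1+ε) ≤ (490/c) * ((c/490) * x) := by
            apply mul_le_mul_of_nonneg_left this (by positivity)
        _ = x := by field_simp
    have h6 : ∀ᶠ D : ℕ in Filter.atTop,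
        (490/c) * Real.log (2*(D:ℝ)) ^ (1+ε) ≤ (D:ℝ) :=
      tendsto_natCast_atTop_atTop.eventually h5
    obtain ⟨N, hN⟩ := Filter.eventually_atTop.mp h6
    exact ⟨max N 3, le_max_right _ _, fun D hD => hN D (le_trans (le_max_left _ _) hD)⟩
  obtain ⟨Δ₀, hΔ₀3, hΔ₀prop⟩ := hasymp
  refine ⟨Δ₀, ?_⟩
  intro V _ G _ hΔ hdeg
  classical
  set Δ := G.maxDegree with hΔdef
  have hΔ3 : 3 ≤ Δ := le_trans hΔ₀3 hΔ
  have hV : Nonempty V := by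
    by_contra h
    rw [not_nonempty_iff] at h
    have : Δ ≤ 0 := G.maxDegree_le_of_forall_degree_le 0 (fun v => (h.false v).elim)
    omega
  have hΔR : (3:ℝ) ≤ (Δ:ℝ) := by exact_mod_cast hΔ3
  set L : ℝ := Real.log (2*(Δ:ℝ)) with hLdef
  set ℓ : ℝ := Real.log (Δ:ℝ) with hℓdef
  have hexp3 : Real.exp 1 ≤ 3 := by
    nlinarith [Real.exp_one_lt_d9]
  have hℓ1 : 1 ≤ ℓ := by
    rw [hℓdef, ← Real.log_exp 1]
    apply Real.log_le_log (Real.exp_pos 1)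
    linarith
  have hLℓ : ℓ ≤ L := by
    rw [hLdef, hℓdef]
    apply Real.log_le_log (by linarith)
    linarith
  have hL1 : 1 ≤ L := le_trans hℓ1 hLℓ
  have hℓε_pos : (0:ℝ) < ℓ ^ ε := Real.rpow_pos_of_pos (by linarith) ε
  have hLε_pos : (0:ℝ) < L ^ (1+ε) := Real.rpow_pos_of_pos (by linarith) _
  -- c ≤ ℓ^ε
  have hc_le : c ≤ ℓ ^ ε := by
    obtain ⟨v₀, hv₀⟩ := G.exists_maximal_degree_vertex
    have h1 := hdeg v₀
    rw [← hv₀] at h1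
    have h2 : c * (Δ:ℝ) / ℓ ^ ε ≤ (Δ:ℝ) := h1
    rw [div_le_iff₀ hℓε_pos] at h2
    have hΔpos : (0:ℝ) < (Δ:ℝ) := by linarith
    nlinarith
  set y : ℝ := (490/c) * L^(1+ε) with hydef
  have hy0 : (0:ℝ) ≤ y := by positivity
  have hyΔ : y ≤ (Δ:ℝ) := hΔ₀prop Δ hΔ
  set k : ℕ := ⌊y⌋₊ with hkdef
  have hky : (k:ℝ) ≤ y := Nat.floor_le hy0
  have hyk1 : y < (k:ℝ) + 1 := Nat.lt_floor_add_one y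
  set M : ℕ := 2*Δ with hMdef
  have hM0 : 0 < M := by omega
  have hkM : k ≤ M := by
    have : (k:ℝ) ≤ (Δ:ℝ) := le_trans hky hyΔ
    have hkΔ : k ≤ Δ := by exact_mod_cast this
    omega
  set n := Fintype.card V with hndef
  -- the bad events
  set A : V → Finset (V → Fin M) := fun v => univ.filter (fun ω : V → Fin M =>
    ∀ j : Fin k, ((G.neighborFinset v).filter fun u => ((ω u : ℕ) = (j : ℕ))).card ≠ 1)
    with hAdef
  set Γ : V → Finset V := fun v =>
    insert v (univ.filter (fun u => ∃ w, G.Adj v w ∧ G.Adj u w)) with hΓdef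
  set d : ℕ := Δ*Δ with hddef
  have hd1 : 1 ≤ d := by
    have : 3*3 ≤ Δ*Δ := Nat.mul_le_mul hΔ3 hΔ3
    omega
  set x : ℝ := 1/((d:ℝ)+1) with hxdef
  set μlo : ℝ := c/(2*ℓ^ε) with hμlodef
  have hμlo_pos : 0 < μlo := by positivity
  set p : ℝ := Real.exp (-(μlo * k/12)) with hpdef
  have hNonΩ : Nonempty (V → Fin M) := ⟨fun _ => ⟨0, hM0⟩⟩
  -- degree facts
  have hdegle : ∀ v : V, G.degree v ≤ Δ := fun v => G.degree_le_maxDegree v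
  have hμv : ∀ v : V, μlo ≤ (G.degree v : ℝ)/(M:ℝ) ∧ (G.degree v : ℝ)/(M:ℝ) ≤ 1/2 := by
    intro v
    have h1 := hdeg v
    have hMR : (M:ℝ) = 2*(Δ:ℝ) := by rw [hMdef]; push_cast; ring
    have hΔpos : (0:ℝ) < (Δ:ℝ) := by linarith
    constructor
    · rw [hμlodef, hMR]
      rw [div_le_div_iff₀ (by positivity) (by positivity)]
      have h2 : c * (Δ:ℝ) / ℓ ^ ε ≤ (G.degree v : ℝ) := h1
      rw [div_le_iff₀ hℓε_pos] at h2
      nlinarith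
    · rw [hMR]
      have h3 : (G.degree v : ℝ) ≤ (Δ:ℝ) := by exact_mod_cast hdegle v
      rw [div_le_iff₀ (by positivity)]
      linarith
  -- probability bound for each bad event
  have hcardΩ : (Fintype.card (V → Fin M) : ℝ) = (M:ℝ)^n := by
    rw [Fintype.card_fun, Fintype.card_fin]
    push_cast
    rfl
  have hp : ∀ v : V, ((A v).card : ℝ) ≤ p * Fintype.card (V → Fin M) := by
    intro v
    have hbound := card_bad_le (V := V) G M k hkM hM0 v
    set μv : ℝ := (G.degree v : ℝ)/(M:ℝ) with hμvdef
    obtain ⟨hμ1, hμ2⟩ := hμv v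
    have hμ0 : 0 ≤ μv := le_trans hμlo_pos.le hμ1
    have hg : (1/5) * Real.exp μv + (4/5) * Real.exp (-(μv/2)) ≤ Real.exp (-(μv/12)) := by
      calc (1/5) * Real.exp μv + (4/5) * Real.exp (-(μv/2)) ≤ 1 - μv/12 := g_le μv hμ0 hμ2
        _ ≤ Real.exp (-(μv/12)) := by
            have := Real.add_one_le_exp (-(μv/12)); linarith
    have hgpow : ((1/5) * Real.exp μv + (4/5) * Real.exp (-(μv/2)))^k
        ≤ Real.exp (-(μv/12))^k := by
      apply pow_le_pow_left₀ (by positivity) hg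
    have hexpk : Real.exp (-(μv/12))^k = Real.exp (-(μv * k/12)) := by
      rw [← Real.exp_nat_mul]
      congr 1
      ring
    have hmono : Real.exp (-(μv * k/12)) ≤ p := by
      rw [hpdef]
      apply Real.exp_le_exp.mpr
      have hk0 : (0:ℝ) ≤ (k:ℝ) := Nat.cast_nonneg k
      nlinarith
    calc ((A v).card : ℝ)
        ≤ ((1/5) * Real.exp μv + (4/5) * Real.exp (-(μv/2)))^k * (M:ℝ)^n := hbound
      _ ≤ p * (M:ℝ)^n := by
          apply mul_le_mul_of_nonneg_right _ (by positivity)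
          calc ((1/5) * Real.exp μv + (4/5) * Real.exp (-(μv/2)))^k
              ≤ Real.exp (-(μv/12))^k := hgpow
            _ = Real.exp (-(μv * k/12)) := hexpk
            _ ≤ p := hmono
      _ = p * Fintype.card (V → Fin M) := by rw [hcardΩ]
  -- dependency bound
  have hself : ∀ v : V, v ∈ Γ v := fun v => Finset.mem_insert_self v _
  have hΓcard : ∀ v : V, (Γ v).card ≤ d + 1 := by
    intro v
    rw [hΓdef]
    calc (insert v (univ.filter (fun u => ∃ w, G.Adj v w ∧ G.Adj u w))).card
        ≤ (univ.filter (fun u => ∃ w, G.Adj v w ∧ G.Adj u w)).card + 1 :=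
          Finset.card_insert_le _ _
      _ ≤ d + 1 := by
          apply Nat.add_le_add_right
          have hsub : univ.filter (fun u => ∃ w, G.Adj v w ∧ G.Adj u w)
              ⊆ (G.neighborFinset v).biUnion (fun w => G.neighborFinset w) := by
            intro u hu
            obtain ⟨w, hvw, huw⟩ := (Finset.mem_filter.mp hu).2
            apply Finset.mem_biUnion.mpr
            exact ⟨w, by simpa using hvw, by simpa using huw.symm⟩
          calc (univ.filter (fun u => ∃ w, G.Adj v w ∧ G.Adj u w)).card
              ≤ ((G.neighborFinset v).biUnion (fun w => G.neighborFinset w)).card :=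
                Finset.card_le_card hsub
            _ ≤ ∑ w ∈ G.neighborFinset v, (G.neighborFinset w).card :=
                Finset.card_biUnion_le
            _ ≤ ∑ _w ∈ G.neighborFinset v, Δ := by
                apply Finset.sum_le_sum
                intro w _
                exact hdegle w
            _ = (G.degree v) * Δ := by
                rw [Finset.sum_const, smul_eq_mul]
                rfl
            _ ≤ d := by
                rw [hddef]
                exact Nat.mul_le_mul_right Δ (hdegle v)
  -- the LLL numerical condition
  have hpx : p ≤ x * (1-x)^d := by
    have h1 : Real.exp (-1) ≤ (1 - x)^d := by
      rw [hxdef]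
      exact exp_neg_one_le_pow d hd1
    have hd1R : (0:ℝ) < (d:ℝ)+1 := by positivity
    have hlogd : Real.log ((d:ℝ)+1) ≤ 2*L := by
      have hdR : ((d:ℝ)+1) ≤ (2*(Δ:ℝ))^2 := by
        rw [hddef]
        push_cast
        nlinarith
      calc Real.log ((d:ℝ)+1) ≤ Real.log ((2*(Δ:ℝ))^2) := Real.log_le_log hd1R hdR
        _ = 2*L := by
            rw [Real.log_pow, hLdef]
            norm_num
  -- μlo * k /12 ≥ 2L + 1
    have hμk : 2*L + 1 ≤ μlo * k / 12 := by
      have hk1 : y - 1 ≤ (k:ℝ) := by linarith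
      have hLsplit : L^(1+ε) = L * L^ε := by
        rw [Real.rpow_add (by linarith) 1 ε, Real.rpow_one]
      have hLε : ℓ^ε ≤ L^ε := Real.rpow_le_rpow (by linarith) hLℓ hε
      have hcℓ : c/(2*ℓ^ε) ≤ 1/2 := by
        rw [div_le_div_iff₀ (by positivity) (by norm_num)]
        nlinarith
      have hstep : 245*L - 1/2 ≤ μlo * k := by
        have e1 : μlo * k ≥ μlo * (y - 1) := by
          apply mul_le_mul_of_nonneg_left hk1 hμlo_pos.le
        have e2 : μlo * (y - 1) = (490/c) * L^(1+ε) * (c/(2*ℓ^ε)) - μlo := by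
          rw [hμlodef, hydef]; ring
        have e3 : (490/c) * L^(1+ε) * (c/(2*ℓ^ε)) = 245 * (L^(1+ε)/ℓ^ε) := by
          field_simp
          ring
        have e4 : L ≤ L^(1+ε)/ℓ^ε := by
          rw [hLsplit, le_div_iff₀ hℓε_pos]
          nlinarith [hLε, Real.rpow_pos_of_pos (show (0:ℝ) < L by linarith) ε]
        have e5 : μlo ≤ 1/2 := hcℓ
        nlinarith
      nlinarith [hμlo_pos, Nat.cast_nonneg (α := ℝ) k]
    have hexpd : ((d:ℝ)+1) ≤ Real.exp (μlo * k / 12 - 1) := by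
      calc ((d:ℝ)+1) = Real.exp (Real.log ((d:ℝ)+1)) := (Real.exp_log hd1R).symm
        _ ≤ Real.exp (μlo * k / 12 - 1) := by
            apply Real.exp_le_exp.mpr
            linarith
    have hpd : p * ((d:ℝ)+1) ≤ Real.exp (-1) := by
      calc p * ((d:ℝ)+1) ≤ p * Real.exp (μlo * k / 12 - 1) := by
            apply mul_le_mul_of_nonneg_left hexpd (Real.exp_pos _).le
        _ = Real.exp (-1) := by
            rw [hpdef, ← Real.exp_add]
            congr 1
            ring
    calc p = (p * ((d:ℝ)+1)) * x := by
          rw [hxdef]; field_simp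
      _ ≤ Real.exp (-1) * x := by
          apply mul_le_mul_of_nonneg_right hpd (by positivity)
      _ ≤ (1-x)^d * x := by
          apply mul_le_mul_of_nonneg_right h1 (by positivity)
      _ = x * (1-x)^d := by ring
  -- independence
  have hdetA : ∀ v : V, DetBy (A v) (G.neighborFinset v) := by
    intro v ω σ hagree
    rw [hAdef]
    simp only [Finset.mem_filter, Finset.mem_univ, true_and]
    have hcnt : ∀ j : Fin k,
        ((G.neighborFinset v).filter fun u => ((ω u : ℕ) = (j : ℕ)))
          = ((G.neighborFinset v).filter fun u => ((σ u : ℕ) = (j : ℕ))) := by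
      intro j
      apply Finset.filter_congr
      intro u hu
      rw [hagree u hu]
    constructor
    · intro h j; rw [← hcnt j]; exact h j
    · intro h j; rw [hcnt j]; exact h j
  have hind : ∀ i : V, ∀ S : Finset V, (∀ j ∈ S, j ∉ Γ i) →
      ((A i ∩ NoBad A S).card : ℝ) * Fintype.card (V → Fin M)
        ≤ (A i).card * (NoBad A S).card := by
    intro i S hS
    have hdetN : DetBy (NoBad A S) (S.biUnion (fun u => G.neighborFinset u)) := by
      intro ω σ hagree
      simp only [NoBad, Finset.mem_filter, Finset.mem_univ, true_and]
      have : ∀ j ∈ S, (ω ∈ A j ↔ σ ∈ A j) := by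
        intro j hj
        apply hdetA j ω σ
        intro u hu
        exact hagree u (Finset.mem_biUnion.mpr ⟨j, hj, hu⟩)
      constructor
      · intro h j hj hmem
        exact h j hj ((this j hj).mpr hmem)
      · intro h j hj hmem
        exact h j hj ((this j hj).mp hmem)
    have hdisj : Disjoint (G.neighborFinset i) (S.biUnion (fun u => G.neighborFinset u)) := by
      rw [Finset.disjoint_left]
      intro w hwN hwB
      obtain ⟨u, huS, hwu⟩ := Finset.mem_biUnion.mp hwB
      apply hS u huS
      rw [hΓdef]
      apply Finset.mem_insert_of_mem
      rw [Finset.mem_filter]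
      refine ⟨Finset.mem_univ u, w, ?_, ?_⟩
      · simpa using hwN
      · simpa using hwu
    have := card_inter_mul_card (hdetA i) hdetN hdisj
    exact le_of_eq (by exact_mod_cast this)
  -- apply LLL
  have hx0 : (0:ℝ) < x := by rw [hxdef]; positivity
  have hx1 : x < 1 := by
    rw [hxdef]
    rw [div_lt_one (by positivity)]
    have : (1:ℝ) ≤ (d:ℝ) := by exact_mod_cast hd1
    linarith
  obtain ⟨ω, hω⟩ := locallemma A Γ d p x hx0 hx1 hself hΓcard hp hpx hind
  -- construct the coloring
  have hcol : ∀ v : V, ∃ j : Fin k,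
      ((G.neighborFinset v).filter fun u => ((ω u : ℕ) = (j : ℕ))).card = 1 := by
    intro v
    have := hω v
    rw [hAdef] at this
    simp only [Finset.mem_filter, Finset.mem_univ, true_and, not_forall, not_not] at this
    exact this
  set f : V → Fin (k+1) := fun u =>
    if h : (ω u : ℕ) < k then ⟨(ω u : ℕ)+1, by omega⟩ else ⟨0, by omega⟩ with hfdef
  have hCFON : IsCFONColoring G f := by
    intro v
    obtain ⟨j, hj⟩ := hcol v
    obtain ⟨a, ha⟩ := Finset.card_eq_one.mp hj
    have haf : a ∈ (G.neighborFinset v).filter fun u => ((ω u : ℕ) = (j : ℕ)) := by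
      rw [ha]; exact Finset.mem_singleton_self a
    rw [Finset.mem_filter] at haf
    refine ⟨⟨(j:ℕ)+1, by omega⟩, a, ⟨?_, ?_⟩, ?_⟩
    · simpa using haf.1
    · rw [hfdef]
      have hlt : (ω a : ℕ) < k := by rw [haf.2]; exact j.isLt
      simp only [dif_pos hlt]
      apply Fin.ext
      simp [haf.2]
    · rintro u ⟨humem, hueq⟩
      have huN : u ∈ G.neighborFinset v := by
        simpa using humem
      have hωu : (ω u : ℕ) = (j : ℕ) := by
        rw [hfdef] at hueq
        by_cases h : (ω u : ℕ) < k
        · simp only [dif_pos h] at hueq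
          have := congrArg Fin.val hueq
          simpa using this
        · simp only [dif_neg h] at hueq
          have := congrArg Fin.val hueq
          simp at this
      have : u ∈ (G.neighborFinset v).filter fun u => ((ω u : ℕ) = (j : ℕ)) :=
        Finset.mem_filter.mpr ⟨huN, hωu⟩
      rw [ha, Finset.mem_singleton] at this
      exact this
  -- conclude
  have hchi : chiON G ≤ k + 1 := Nat.sInf_le ⟨f, hCFON⟩
  have hchiR : (chiON G : ℝ) ≤ (k:ℝ) + 1 := by exact_mod_cast hchi
  calc (chiON G : ℝ) ≤ (k:ℝ) + 1 := hchiR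
    _ ≤ y + 1 := by linarith
    _ = (490 / c) * Real.log (2 * (Δ:ℝ)) ^ (1 + ε) + 1 := by rw [hydef]

end Main
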